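/- Let A, B : ℝ → ℝ be C² functions such that for every c ∈ ℝ either (A'(c) = 0 and B'(c) = 0) or B'(c)² < 2·A'(c). Let F(c,t) := ((A(c)/2)·t² + B(c)·t + c, t), let Ω := F(ℝ²) (an open set on which F has an inverse of the form F⁻¹(x,t) = (c(x,t), t)), and define u : Ω → ℝ by u(x,t) := A(c(x,t))·t + B(c(x,t)). Then u is C² on Ω, satisfies L_u(L_u u) = 0 on Ω, u(x,0) = B(x) and (L_u u)(x,0) = A(x) for all x ∈ ℝ; moreover u is the unique C² function on Ω with these properties. -/

import Mathlib

open Set Filter Real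

/-- The operator `L_u` acting on `v`:  `(L_u v)(x,t) = ∂v/∂t + u·∂v/∂x`,
with coordinates `(x,t)` on `ℝ × ℝ`. -/
noncomputable def Lop (u v : ℝ × ℝ → ℝ) : ℝ × ℝ → ℝ :=
  fun p => fderiv ℝ v p (0, 1) + u p * fderiv ℝ v p (1, 0)

lemma quadpos {a b : ℝ} (h : (a = 0 ∧ b = 0) ∨ b ^ 2 < 2 * a) (t : ℝ) :
    0 < a / 2 * t ^ 2 + b * t + 1 := by
  rcases h with ⟨h1, h2⟩ | h
  · simp [h1, h2]
  · have ha : 0 < a := by nlinarith [sq_nonneg b]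
    have := sq_nonneg (a * t + b)
    nlinarith

/-- the underlying linear equivalence -/
noncomputable def myLEquiv (av bv : ℝ) (ha : av ≠ 0) : (ℝ × ℝ) ≃ₗ[ℝ] (ℝ × ℝ) where
  toFun p := (av * p.1 + bv * p.2, p.2)
  invFun q := ((q.1 - bv * q.2) / av, q.2)
  map_add' p q := by
    simp only [Prod.fst_add, Prod.snd_add, Prod.mk_add_mk, Prod.mk.injEq]
    exact ⟨by ring, trivial⟩
  map_smul' m p := by
    simp only [Prod.smul_fst, Prod.smul_snd, Prod.smul_mk, RingHom.id_apply, smul_eq_mul,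
      Prod.mk.injEq]
    exact ⟨by ring, trivial⟩
  left_inv p := by
    rw [Prod.ext_iff]
    refine ⟨by field_simp; ring, rfl⟩
  right_inv q := by
    rw [Prod.ext_iff]
    refine ⟨by field_simp; ring, rfl⟩

noncomputable def myEquiv (av bv : ℝ) (ha : av ≠ 0) : (ℝ × ℝ) ≃L[ℝ] (ℝ × ℝ) :=
  (myLEquiv av bv ha).toContinuousLinearEquiv

@[simp] lemma myEquiv_apply (av bv : ℝ) (ha : av ≠ 0) (p : ℝ × ℝ) :
    myEquiv av bv ha p = (av * p.1 + bv * p.2, p.2) := rfl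

@[simp] lemma myEquiv_symm_apply (av bv : ℝ) (ha : av ≠ 0) (q : ℝ × ℝ) :
    (myEquiv av bv ha).symm q = ((q.1 - bv * q.2) / av, q.2) := rfl

/-- A linear 2×2 ODE system with continuous coefficients and zero initial data
has only the zero solution. -/
lemma lin_ode_zero (a b e f : ℝ → ℝ) (ha : Continuous a) (hb : Continuous b)
    (he : ∀ t, HasDerivAt e (f t - a t * e t) t)
    (hf : ∀ t, HasDerivAt f (-(b t) * e t) t)
    (h0e : e 0 = 0) (h0f : f 0 = 0) : ∀ t, e t = 0 := by
  intro t1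
  set T : ℝ := |t1| + 1 with hT
  have hT0 : 0 < T := by positivity
  have ht1mem : t1 ∈ Icc (-T) T := by
    constructor
    · linarith [neg_abs_le t1]
    · linarith [le_abs_self t1]
  -- clamp into [-T, T]
  set cl : ℝ → ℝ := fun t => max (-T) (min t T) with hcl
  have hclmem : ∀ t, cl t ∈ Icc (-T) T := by
    intro t
    constructor
    · exact le_max_left _ _
    · exact max_le (by linarith) (min_le_right _ _)
  have hclid : ∀ t ∈ Icc (-T) T, cl t = t := by
    intro t ht
    simp only [hcl]
    rw [min_eq_left ht.2, max_eq_right ht.1]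
  -- bounds on the coefficients
  obtain ⟨C, hC⟩ := (isCompact_Icc (a := -T) (b := T)).exists_bound_of_continuousOn
    ha.continuousOn
  obtain ⟨D, hD⟩ := (isCompact_Icc (a := -T) (b := T)).exists_bound_of_continuousOn
    hb.continuousOn
  have hC0 : 0 ≤ C := le_trans (norm_nonneg _) (hC 0 (by constructor <;> linarith))
  have hD0 : 0 ≤ D := le_trans (norm_nonneg _) (hD 0 (by constructor <;> linarith))
  -- the vector field
  set V : ℝ → ℝ × ℝ → ℝ × ℝ := fun t y => (y.2 - a (cl t) * y.1, -(b (cl t)) * y.1) with hV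
  set K : NNReal := Real.toNNReal (1 + C + D) with hK
  have hlip : ∀ t, LipschitzWith K (V t) := by
    intro t
    apply LipschitzWith.of_dist_le_mul
    intro y z
    have hac : |a (cl t)| ≤ C := hC _ (hclmem t)
    have hbc : |b (cl t)| ≤ D := hD _ (hclmem t)
    have hKc : (K : ℝ) = 1 + C + D := Real.coe_toNNReal _ (by linarith)
    rw [Prod.dist_eq, Prod.dist_eq, hKc]
    have h1 : dist y.1 z.1 ≤ max (dist y.1 z.1) (dist y.2 z.2) := le_max_left _ _
    have h2 : dist y.2 z.2 ≤ max (dist y.1 z.1) (dist y.2 z.2) := le_max_right _ _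
    have hd0 : 0 ≤ max (dist y.1 z.1) (dist y.2 z.2) := le_trans dist_nonneg h1
    apply max_le
    · simp only [hV, Real.dist_eq]
      have : y.2 - a (cl t) * y.1 - (z.2 - a (cl t) * z.1)
          = (y.2 - z.2) - a (cl t) * (y.1 - z.1) := by ring
      rw [this]
      calc |(y.2 - z.2) - a (cl t) * (y.1 - z.1)|
          ≤ |y.2 - z.2| + |a (cl t) * (y.1 - z.1)| := abs_sub _ _
        _ = |y.2 - z.2| + |a (cl t)| * |y.1 - z.1| := by rw [abs_mul]
        _ ≤ max (dist y.1 z.1) (dist y.2 z.2) + C * max (dist y.1 z.1) (dist y.2 z.2) := by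
            apply add_le_add
            · exact h2
            · apply mul_le_mul hac h1 (abs_nonneg _) hC0
        _ ≤ (1 + C + D) * max (dist y.1 z.1) (dist y.2 z.2) := by nlinarith
    · simp only [hV, Real.dist_eq]
      have : -(b (cl t)) * y.1 - -(b (cl t)) * z.1 = -(b (cl t) * (y.1 - z.1)) := by ring
      rw [this, abs_neg, abs_mul]
      calc |b (cl t)| * |y.1 - z.1| ≤ D * max (dist y.1 z.1) (dist y.2 z.2) :=
            mul_le_mul hbc h1 (abs_nonneg _) hD0
        _ ≤ (1 + C + D) * max (dist y.1 z.1) (dist y.2 z.2) := by nlinarith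
  -- the two solutions
  set g : ℝ → ℝ × ℝ := fun t => (e t, f t) with hg
  have hgd : ∀ t ∈ Ioo (-T) T, HasDerivAt g (V t (g t)) t := by
    intro t ht
    have : V t (g t) = (f t - a t * e t, -(b t) * e t) := by
      simp only [hV, hg, hclid t (Ioo_subset_Icc_self ht)]
    rw [this]
    exact (he t).prodMk (hf t)
  have hzd : ∀ t ∈ Ioo (-T) T, HasDerivAt (fun _ : ℝ => ((0 : ℝ), (0 : ℝ))) (V t ((0 : ℝ), (0 : ℝ))) t := by
    intro t ht
    have : V t ((0:ℝ), (0:ℝ)) = ((0:ℝ), (0:ℝ)) := by simp [hV]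
    rw [this]
    exact hasDerivAt_const t _
  have heq := ODE_solution_unique_of_mem_Icc (s := fun _ => (univ : Set (ℝ × ℝ)))
    (fun t _ => (hlip t).lipschitzOnWith)
    (show (0:ℝ) ∈ Ioo (-T) T by constructor <;> linarith)
    (continuousOn_of_forall_continuousAt fun t _ =>
      (((he t).prodMk (hf t)).continuousAt))
    hgd (fun _ _ => trivial)
    (continuousOn_const)
    hzd (fun _ _ => trivial)
    (by simp [hg, h0e, h0f])
  have h2 := heq ht1mem
  have h3 : (e t1, f t1) = ((0:ℝ), (0:ℝ)) := h2
  exact (Prod.ext_iff.mp h3).1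

section
variable (A B : ℝ → ℝ) (hA : ContDiff ℝ 2 A) (hB : ContDiff ℝ 2 B)

include hA hB in
lemma hders (s t : ℝ) :
    HasDerivAt (fun s => A s / 2 * t ^ 2 + B s * t + s)
      (deriv A s / 2 * t ^ 2 + deriv B s * t + 1) s := by
  have hA' : HasDerivAt A (deriv A s) s :=
    ((hA.differentiable (by norm_num)) s).hasDerivAt
  have hB' : HasDerivAt B (deriv B s) s :=
    ((hB.differentiable (by norm_num)) s).hasDerivAt
  exact (((hA'.div_const 2).mul_const (t ^ 2)).add (hB'.mul_const t)).add (hasDerivAt_id s)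

include hA hB in
lemma hFinj (hcond : ∀ s : ℝ, (deriv A s = 0 ∧ deriv B s = 0) ∨ (deriv B s) ^ 2 < 2 * deriv A s)
    (F : ℝ × ℝ → ℝ × ℝ)
    (hF : ∀ s t : ℝ, F (s, t) = (A s / 2 * t ^ 2 + B s * t + s, t)) :
    Function.Injective F := by
  have hmono : ∀ t : ℝ, StrictMono (fun s => A s / 2 * t ^ 2 + B s * t + s) := by
    intro t
    apply strictMono_of_deriv_pos
    intro s
    rw [(hders A B hA hB s t).deriv]
    exact quadpos (hcond s) t
  intro p q h
  obtain ⟨p1, p2⟩ := p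
  obtain ⟨q1, q2⟩ := q
  rw [hF, hF, Prod.mk.injEq] at h
  obtain ⟨h1, h2⟩ := h
  subst h2
  have := (hmono p2).injective h1
  simp only [this]

include hA hB in
lemma hFstrict (hcond : ∀ s : ℝ, (deriv A s = 0 ∧ deriv B s = 0) ∨ (deriv B s) ^ 2 < 2 * deriv A s)
    (F : ℝ × ℝ → ℝ × ℝ)
    (hF : ∀ s t : ℝ, F (s, t) = (A s / 2 * t ^ 2 + B s * t + s, t)) (s t : ℝ) :
    HasStrictFDerivAt F
      (↑(myEquiv (deriv A s / 2 * t ^ 2 + deriv B s * t + 1) (A s * t + B s)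
        (ne_of_gt (quadpos (hcond s) t))) : ℝ × ℝ →L[ℝ] ℝ × ℝ) (s, t) := by
  have hfe : F = fun p : ℝ × ℝ => (A p.1 / 2 * p.2 ^ 2 + B p.1 * p.2 + p.1, p.2) :=
    funext fun p => hF p.1 p.2
  rw [hfe]
  simp only [div_eq_mul_inv]
  have hfst := (ContinuousLinearMap.fst ℝ ℝ ℝ).hasStrictFDerivAt (x := ((s, t) : ℝ × ℝ))
  have hsnd := (ContinuousLinearMap.snd ℝ ℝ ℝ).hasStrictFDerivAt (x := ((s, t) : ℝ × ℝ))
  have hAp : HasStrictFDerivAt (fun p : ℝ × ℝ => A p.1)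
      (deriv A s • ContinuousLinearMap.fst ℝ ℝ ℝ) (s, t) :=
    HasStrictDerivAt.comp_hasStrictFDerivAt _ (hA.contDiffAt.hasStrictDerivAt (by norm_num)) hfst
  have hBp : HasStrictFDerivAt (fun p : ℝ × ℝ => B p.1)
      (deriv B s • ContinuousLinearMap.fst ℝ ℝ ℝ) (s, t) :=
    HasStrictDerivAt.comp_hasStrictFDerivAt _ (hB.contDiffAt.hasStrictDerivAt (by norm_num)) hfst
  have hsq : HasStrictFDerivAt (fun p : ℝ × ℝ => p.2 ^ 2)
      ((((2:ℕ) : ℝ) * t ^ (2 - 1)) • ContinuousLinearMap.snd ℝ ℝ ℝ) (s, t) :=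
    by exact (hasStrictDerivAt_pow 2 t).comp_hasStrictFDerivAt (s, t) hsnd
  have full := (((hAp.mul_const ((2:ℝ)⁻¹)).mul hsq).add (hBp.mul hsnd)).add hfst
  have final := full.prodMk hsnd
  refine final.congr_fderiv ?_
  apply ContinuousLinearMap.ext
  intro q
  simp only [ContinuousLinearEquiv.coe_coe, myEquiv_apply, ContinuousLinearMap.prod_apply,
    ContinuousLinearMap.add_apply, ContinuousLinearMap.smul_apply, ContinuousLinearMap.coe_fst',
    ContinuousLinearMap.coe_snd', smul_eq_mul, Prod.mk.injEq]
  refine ⟨by push_cast; ring, trivial⟩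
end

section
variable {A B : ℝ → ℝ}

lemma keyfacts (hA : ContDiff ℝ 2 A) (hB : ContDiff ℝ 2 B)
    (hcond : ∀ s : ℝ, (deriv A s = 0 ∧ deriv B s = 0) ∨ (deriv B s) ^ 2 < 2 * deriv A s)
    (F : ℝ × ℝ → ℝ × ℝ)
    (hF : ∀ s t : ℝ, F (s, t) = (A s / 2 * t ^ 2 + B s * t + s, t))
    (Ω : Set (ℝ × ℝ)) (hΩ : Ω = Set.range F)
    (c : ℝ × ℝ → ℝ) (hc : ∀ p ∈ Ω, F (c p, p.2) = p) :
    ∀ p ∈ Ω, ∃ ℓ : ℝ × ℝ →L[ℝ] ℝ,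
      ContDiffAt ℝ 2 c p ∧ HasFDerivAt c ℓ p ∧ Ω ∈ nhds p ∧
      ℓ (1, 0) = 1 / (deriv A (c p) / 2 * p.2 ^ 2 + deriv B (c p) * p.2 + 1) ∧
      ℓ (0, 1) = -(A (c p) * p.2 + B (c p)) /
        (deriv A (c p) / 2 * p.2 ^ 2 + deriv B (c p) * p.2 + 1) := by
  have hinj := hFinj A B hA hB hcond F hF
  have hFC : ContDiff ℝ 2 F := by
    have : F = fun p : ℝ × ℝ => (A p.1 / 2 * p.2 ^ 2 + B p.1 * p.2 + p.1, p.2) :=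
      funext fun p => hF p.1 p.2
    rw [this]
    exact ((((hA.comp contDiff_fst).div_const 2).mul (contDiff_snd.pow 2)).add
      (((hB.comp contDiff_fst).mul contDiff_snd)) |>.add contDiff_fst).prodMk contDiff_snd
  rintro p hp
  have hpmem : p ∈ Set.range F := hΩ ▸ hp
  obtain ⟨⟨s, t⟩, rfl⟩ := hpmem
  have hp2 : (F (s, t)).2 = t := by rw [hF]
  have hcs : c (F (s, t)) = s := by
    have h1 : F (c (F (s, t)), (F (s, t)).2) = F (s, t) := hc _ hp
    have h2 := hinj h1
    have := congrArg Prod.fst h2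
    simpa using this
  set av := deriv A s / 2 * t ^ 2 + deriv B s * t + 1 with hav
  set bv := A s * t + B s with hbv
  have hane : av ≠ 0 := ne_of_gt (quadpos (hcond s) t)
  have hstrict := hFstrict A B hA hB hcond F hF s t
  set E := myEquiv av bv hane with hE
  set G := hstrict.localInverse F E (s, t) with hG
  have hGd : HasStrictFDerivAt G (↑E.symm : ℝ × ℝ →L[ℝ] ℝ × ℝ) (F (s, t)) :=
    hstrict.to_localInverse
  have hrev : ∀ᶠ q in nhds (F (s, t)), F (G q) = q := hstrict.eventually_right_inverse
  have hmemΩ : ∀ᶠ q in nhds (F (s, t)), q ∈ Ω := hrev.mono fun q hq => hΩ ▸ ⟨G q, hq⟩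
  have hΩn : Ω ∈ nhds (F (s, t)) := hmemΩ
  have hceq : c =ᶠ[nhds (F (s, t))] fun q => (G q).1 := by
    filter_upwards [hrev, hmemΩ] with q hq hqΩ
    have h1 : F (c q, q.2) = F (G q) := (hc q hqΩ).trans hq.symm
    have h2 := hinj h1
    exact (congrArg Prod.fst h2)
  have hGCD : ContDiffAt ℝ 2 G (F (s, t)) :=
    hFC.contDiffAt.to_localInverse (f' := E) hstrict.hasFDerivAt (by norm_num)
  have hcCD : ContDiffAt ℝ 2 c (F (s, t)) :=
    ((contDiff_fst.contDiffAt.comp _ hGCD)).congr_of_eventuallyEq hceq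
  set ℓ : ℝ × ℝ →L[ℝ] ℝ := (ContinuousLinearMap.fst ℝ ℝ ℝ).comp (E.symm : ℝ × ℝ →L[ℝ] ℝ × ℝ) with hℓ
  have hcd : HasFDerivAt c ℓ (F (s, t)) := by
    have base : HasFDerivAt (fun q => (G q).1) ℓ (F (s, t)) :=
      ((ContinuousLinearMap.fst ℝ ℝ ℝ).hasFDerivAt).comp _ hGd.hasFDerivAt
    exact base.congr_of_eventuallyEq hceq
  refine ⟨ℓ, hcCD, hcd, hΩn, ?_, ?_⟩
  · rw [hcs, hp2]
    simp [hℓ, hE, one_div]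
    exact hav
  · rw [hcs, hp2]
    simp [hℓ, hE]
    ring
end

section
variable {A B : ℝ → ℝ}

lemma eq1lemma (hA : ContDiff ℝ 2 A) (hB : ContDiff ℝ 2 B)
    (hcond : ∀ s : ℝ, (deriv A s = 0 ∧ deriv B s = 0) ∨ (deriv B s) ^ 2 < 2 * deriv A s)
    (F : ℝ × ℝ → ℝ × ℝ)
    (hF : ∀ s t : ℝ, F (s, t) = (A s / 2 * t ^ 2 + B s * t + s, t))
    (Ω : Set (ℝ × ℝ)) (hΩ : Ω = Set.range F)
    (c : ℝ × ℝ → ℝ) (hc : ∀ p ∈ Ω, F (c p, p.2) = p)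
    (u : ℝ × ℝ → ℝ) (hu : ∀ p : ℝ × ℝ, u p = A (c p) * p.2 + B (c p)) :
    ∀ p ∈ Ω, Lop u u p = A (c p) ∧ Lop u (Lop u u) p = 0 := by
  have key := keyfacts hA hB hcond F hF Ω hΩ c hc
  have huf : u = fun q => A (c q) * q.2 + B (c q) := funext hu
  -- first: the fderiv of u at any point of Ω
  have main : ∀ p ∈ Ω, Lop u u p = A (c p) := by
    intro p hp
    obtain ⟨ℓ, hcCD, hcd, hΩn, hl1, hl0⟩ := key p hp
    have hAc : HasFDerivAt (fun q => A (c q)) (deriv A (c p) • ℓ) p :=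
      (((hA.differentiable (by norm_num)) (c p)).hasDerivAt).comp_hasFDerivAt p hcd
    have hBc : HasFDerivAt (fun q => B (c q)) (deriv B (c p) • ℓ) p :=
      (((hB.differentiable (by norm_num)) (c p)).hasDerivAt).comp_hasFDerivAt p hcd
    have hsnd : HasFDerivAt (fun q : ℝ × ℝ => q.2) (ContinuousLinearMap.snd ℝ ℝ ℝ) p :=
      (ContinuousLinearMap.snd ℝ ℝ ℝ).hasFDerivAt
    have hud : HasFDerivAt u
        (A (c p) • ContinuousLinearMap.snd ℝ ℝ ℝ + p.2 • deriv A (c p) • ℓ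
          + deriv B (c p) • ℓ) p := by
      rw [huf]
      exact (hAc.mul hsnd).add hBc
    have hfd := hud.fderiv
    simp only [Lop, hfd]
    simp only [ContinuousLinearMap.add_apply, ContinuousLinearMap.smul_apply,
      ContinuousLinearMap.coe_snd', smul_eq_mul, hl1, hl0, hu p]
    have hane : deriv A (c p) / 2 * p.2 ^ 2 + deriv B (c p) * p.2 + 1 ≠ 0 :=
      ne_of_gt (quadpos (hcond (c p)) p.2)
    field_simp
    ring
  intro p hp
  obtain ⟨ℓ, hcCD, hcd, hΩn, hl1, hl0⟩ := key p hp
  refine ⟨main p hp, ?_⟩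
  have hAc : HasFDerivAt (fun q => A (c q)) (deriv A (c p) • ℓ) p :=
    (((hA.differentiable (by norm_num)) (c p)).hasDerivAt).comp_hasFDerivAt p hcd
  have hev : Lop u u =ᶠ[nhds p] fun q => A (c q) :=
    Filter.eventually_of_mem hΩn fun q hq => main q hq
  have hLd : HasFDerivAt (Lop u u) (deriv A (c p) • ℓ) p :=
    hAc.congr_of_eventuallyEq hev
  simp only [Lop, hLd.fderiv]
  simp only [ContinuousLinearMap.smul_apply, smul_eq_mul, hl1, hl0, hu p]
  have hane : deriv A (c p) / 2 * p.2 ^ 2 + deriv B (c p) * p.2 + 1 ≠ 0 :=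
    ne_of_gt (quadpos (hcond (c p)) p.2)
  field_simp
  ring
end

section
variable {A B : ℝ → ℝ}

lemma uniq_lemma (hA : ContDiff ℝ 2 A) (hB : ContDiff ℝ 2 B)
    (hcond : ∀ s : ℝ, (deriv A s = 0 ∧ deriv B s = 0) ∨ (deriv B s) ^ 2 < 2 * deriv A s)
    (F : ℝ × ℝ → ℝ × ℝ)
    (hF : ∀ s t : ℝ, F (s, t) = (A s / 2 * t ^ 2 + B s * t + s, t))
    (Ω : Set (ℝ × ℝ)) (hΩ : Ω = Set.range F)
    (c : ℝ × ℝ → ℝ) (hc : ∀ p ∈ Ω, F (c p, p.2) = p)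
    (u : ℝ × ℝ → ℝ) (hu : ∀ p : ℝ × ℝ, u p = A (c p) * p.2 + B (c p))
    (v : ℝ × ℝ → ℝ) (hv1 : ContDiffOn ℝ 2 v Ω)
    (hv2 : ∀ p ∈ Ω, Lop v (Lop v v) p = 0)
    (hv3 : ∀ x : ℝ, v (x, 0) = B x) (hv4 : ∀ x : ℝ, Lop v v (x, 0) = A x) :
    Set.EqOn u v Ω := by
  have key := keyfacts hA hB hcond F hF Ω hΩ c hc
  have hinj := hFinj A B hA hB hcond F hF
  have hΩo : IsOpen Ω := by
    rw [isOpen_iff_mem_nhds]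
    intro p hp
    obtain ⟨ℓ, -, -, hΩn, -, -⟩ := key p hp
    exact hΩn
  -- facts about v and w := Lop v v on Ω
  set w := Lop v v with hw
  have hvCD : ∀ q ∈ Ω, ContDiffAt ℝ 2 v q := fun q hq => hv1.contDiffAt (hΩo.mem_nhds hq)
  have hvd : ∀ q ∈ Ω, HasFDerivAt v (fderiv ℝ v q) q := fun q hq =>
    ((hvCD q hq).differentiableAt (by norm_num)).hasFDerivAt
  have hfdvCD : ∀ q ∈ Ω, ContDiffAt ℝ 1 (fderiv ℝ v) q := fun q hq =>
    (hvCD q hq).fderiv_right (by norm_num)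
  have hwCD : ∀ q ∈ Ω, ContDiffAt ℝ 1 w q := by
    intro q hq
    have h1 : ContDiffAt ℝ 1 (fun q => fderiv ℝ v q ((0 : ℝ), (1 : ℝ))) q :=
      ((ContinuousLinearMap.apply ℝ ℝ ((0 : ℝ), (1 : ℝ))).contDiff.contDiffAt).comp q
        (hfdvCD q hq)
    have h2 : ContDiffAt ℝ 1 (fun q => fderiv ℝ v q ((1 : ℝ), (0 : ℝ))) q :=
      ((ContinuousLinearMap.apply ℝ ℝ ((1 : ℝ), (0 : ℝ))).contDiff.contDiffAt).comp q
        (hfdvCD q hq)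
    exact h1.add (((hvCD q hq).of_le one_le_two).mul h2)
  have hwd : ∀ q ∈ Ω, HasFDerivAt w (fderiv ℝ w q) q := fun q hq =>
    ((hwCD q hq).differentiableAt (by norm_num)).hasFDerivAt
  have hfdwcont : ∀ q ∈ Ω, ContinuousAt (fderiv ℝ w) q := fun q hq =>
    ((hwCD q hq).fderiv_right (m := 0) (by norm_num)).continuousAt
  -- now fix a point of Ω
  intro p hp
  have hpmem : p ∈ Set.range F := hΩ ▸ hp
  obtain ⟨⟨s0, t0⟩, rfl⟩ := hpmem
  set γ : ℝ → ℝ := fun t => A s0 / 2 * t ^ 2 + B s0 * t + s0 with hγ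
  have hFγ : ∀ t, F (s0, t) = (γ t, t) := fun t => hF s0 t
  have hγΩ : ∀ t, (γ t, t) ∈ Ω := fun t => hΩ ▸ ⟨(s0, t), hFγ t⟩
  have hcγ : ∀ t, c (γ t, t) = s0 := by
    intro t
    have h1 : F (c (γ t, t), (γ t, t).2) = (γ t, t) := hc _ (hγΩ t)
    have h2 : F (c (γ t, t), t) = F (s0, t) := by
      simpa [hFγ t] using h1
    have := hinj h2
    exact (Prod.ext_iff.mp this).1
  have huγ : ∀ t, u (γ t, t) = A s0 * t + B s0 := by
    intro t
    rw [hu]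
    simp [hcγ t]
  -- the coefficient functions
  set a : ℝ → ℝ := fun t => fderiv ℝ v (γ t, t) ((1 : ℝ), (0 : ℝ)) with ha
  set b : ℝ → ℝ := fun t => fderiv ℝ w (γ t, t) ((1 : ℝ), (0 : ℝ)) with hb
  set e : ℝ → ℝ := fun t => (A s0 * t + B s0) - v (γ t, t) with he
  set f : ℝ → ℝ := fun t => A s0 - w (γ t, t) with hf
  have hcurvec : Continuous fun t : ℝ => (γ t, t) := by
    apply Continuous.prodMk
    · fun_prop
    · exact continuous_id
  have hacont : Continuous a := by
    rw [continuous_iff_continuousAt]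
    intro t
    have hstep : ContinuousAt (fderiv ℝ v ∘ (fun t : ℝ => (γ t, t))) t :=
      ContinuousAt.comp ((hfdvCD _ (hγΩ t)).continuousAt) hcurvec.continuousAt
    exact ContinuousAt.comp
      ((ContinuousLinearMap.apply ℝ ℝ ((1 : ℝ), (0 : ℝ))).continuous.continuousAt) hstep
  have hbcont : Continuous b := by
    rw [continuous_iff_continuousAt]
    intro t
    have hstep : ContinuousAt (fderiv ℝ w ∘ (fun t : ℝ => (γ t, t))) t :=
      ContinuousAt.comp (hfdwcont _ (hγΩ t)) hcurvec.continuousAt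
    exact ContinuousAt.comp
      ((ContinuousLinearMap.apply ℝ ℝ ((1 : ℝ), (0 : ℝ))).continuous.continuousAt) hstep
  -- derivative facts along the curve
  have hγd : ∀ t, HasDerivAt γ (A s0 * t + B s0) t := by
    intro t
    have h1 : HasDerivAt (fun t : ℝ => A s0 / 2 * t ^ 2)
        (A s0 / 2 * (((2 : ℕ) : ℝ) * t ^ (2 - 1))) t := (hasDerivAt_pow 2 t).const_mul (A s0 / 2)
    have h2 : HasDerivAt (fun t : ℝ => B s0 * t) (B s0) t := by
      simpa using (hasDerivAt_id t).const_mul (B s0)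
    have h3 := (h1.add h2).add_const s0
    refine h3.congr_deriv ?_
    push_cast
    ring
  have hcurved : ∀ t, HasDerivAt (fun t : ℝ => (γ t, t)) ((A s0 * t + B s0, 1) : ℝ × ℝ) t :=
    fun t => (hγd t).prodMk (hasDerivAt_id t)
  have hsplit : ∀ t (L : ℝ × ℝ →L[ℝ] ℝ),
      L ((A s0 * t + B s0, 1) : ℝ × ℝ) = L (0, 1) + (A s0 * t + B s0) * L (1, 0) := by
    intro t L
    have hv : ((A s0 * t + B s0, 1) : ℝ × ℝ) = ((0 : ℝ), (1 : ℝ)) + (A s0 * t + B s0) • ((1 : ℝ), (0 : ℝ)) := by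
      simp [Prod.ext_iff]
    rw [hv, map_add, map_smul, smul_eq_mul]
  have hed : ∀ t, HasDerivAt e (f t - a t * e t) t := by
    intro t
    have hvcomp0 := HasFDerivAt.comp_hasDerivAt_of_eq t (hvd _ (hγΩ t)) (hcurved t) rfl
    have hvcomp : HasDerivAt (fun t => v (γ t, t))
        (fderiv ℝ v (γ t, t) ((A s0 * t + B s0, 1) : ℝ × ℝ)) t := hvcomp0
    have hlin : HasDerivAt (fun t : ℝ => A s0 * t + B s0) (A s0) t := by
      simpa using ((hasDerivAt_id t).const_mul (A s0)).add_const (B s0)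
    have h4 := hlin.sub hvcomp
    refine h4.congr_deriv ?_
    rw [hsplit t]
    simp only [hf, he, ha, hw, Lop]
    ring
  have hfd : ∀ t, HasDerivAt f (-(b t) * e t) t := by
    intro t
    have hwcomp0 := HasFDerivAt.comp_hasDerivAt_of_eq t (hwd _ (hγΩ t)) (hcurved t) rfl
    have hwcomp : HasDerivAt (fun t => w (γ t, t))
        (fderiv ℝ w (γ t, t) ((A s0 * t + B s0, 1) : ℝ × ℝ)) t := hwcomp0
    have h4 := (hasDerivAt_const t (A s0)).sub hwcomp
    refine h4.congr_deriv ?_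
    rw [hsplit t]
    have hzero : Lop v w (γ t, t) = 0 := hv2 _ (hγΩ t)
    simp only [Lop] at hzero
    simp only [hf, he, hb, Lop]
    -- use hzero : fderiv w (0,1) + v * fderiv w (1,0) = 0
    nlinarith [hzero]
  have hγ0 : γ 0 = s0 := by simp [hγ]
  have he0 : e 0 = 0 := by
    simp only [he]
    rw [show ((γ 0, (0:ℝ)) : ℝ × ℝ) = ((s0 : ℝ), (0:ℝ)) by rw [hγ0]]
    rw [hv3 s0]
    ring
  have hf0 : f 0 = 0 := by
    simp only [hf]
    rw [show ((γ 0, (0:ℝ)) : ℝ × ℝ) = ((s0 : ℝ), (0:ℝ)) by rw [hγ0]]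
    rw [hv4 s0]
    ring
  have hzero := lin_ode_zero a b e f hacont hbcont hed hfd he0 hf0
  have hez := hzero t0
  have hpeq : F (s0, t0) = (γ t0, t0) := hFγ t0
  rw [hpeq]
  have : v (γ t0, t0) = A s0 * t0 + B s0 := by
    have := hez
    simp only [he] at this
    linarith
  rw [huγ t0, this]
end

theorem stmt11 (A B : ℝ → ℝ) (hA : ContDiff ℝ 2 A) (hB : ContDiff ℝ 2 B)
    (hcond : ∀ s : ℝ, (deriv A s = 0 ∧ deriv B s = 0) ∨ (deriv B s) ^ 2 < 2 * deriv A s)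
    (F : ℝ × ℝ → ℝ × ℝ)
    (hF : ∀ s t : ℝ, F (s, t) = (A s / 2 * t ^ 2 + B s * t + s, t))
    (Ω : Set (ℝ × ℝ)) (hΩ : Ω = Set.range F)
    (c : ℝ × ℝ → ℝ) (hc : ∀ p ∈ Ω, F (c p, p.2) = p)
    (u : ℝ × ℝ → ℝ) (hu : ∀ p : ℝ × ℝ, u p = A (c p) * p.2 + B (c p)) :
    ContDiffOn ℝ 2 u Ω ∧
    (∀ p ∈ Ω, Lop u (Lop u u) p = 0) ∧
    (∀ x : ℝ, u (x, 0) = B x) ∧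
    (∀ x : ℝ, Lop u u (x, 0) = A x) ∧
    (∀ v : ℝ × ℝ → ℝ, ContDiffOn ℝ 2 v Ω → (∀ p ∈ Ω, Lop v (Lop v v) p = 0) →
      (∀ x : ℝ, v (x, 0) = B x) → (∀ x : ℝ, Lop v v (x, 0) = A x) →
      Set.EqOn u v Ω) := by
  have key := keyfacts hA hB hcond F hF Ω hΩ c hc
  have heqs := eq1lemma hA hB hcond F hF Ω hΩ c hc u hu
  have hmem0 : ∀ x : ℝ, ((x, (0 : ℝ)) : ℝ × ℝ) ∈ Ω := by
    intro x
    rw [hΩ]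
    exact ⟨(x, 0), by rw [hF]; norm_num⟩
  have hcx : ∀ x : ℝ, c (x, (0 : ℝ)) = x := by
    intro x
    have h := hc (x, 0) (hmem0 x)
    rw [hF] at h
    have := (Prod.ext_iff.mp h).1
    simpa using this
  refine ⟨?_, fun p hp => (heqs p hp).2, ?_, ?_, ?_⟩
  · intro p hp
    obtain ⟨ℓ, hcCD, -, -, -, -⟩ := key p hp
    have h : ContDiffAt ℝ 2 u p := by
      have h2 := ((hA.contDiffAt.comp p hcCD).mul contDiffAt_snd).add
        (hB.contDiffAt.comp p hcCD)
      rw [funext hu]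
      exact h2
    exact h.contDiffWithinAt
  · intro x
    rw [hu]
    simp [hcx x]
  · intro x
    rw [(heqs (x, 0) (hmem0 x)).1]
    simp only [hcx x]
  · intro v hv1 hv2 hv3 hv4
    exact uniq_lemma hA hB hcond F hF Ω hΩ c hc u hu v hv1 hv2 hv3 hv4
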